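/- arXiv:2506.10250 — 2 statements merged into one kernel-verified Lean document; each statement's English description precedes it below -/
import Mathlib

section
/- Let H : Matrix (Fin d) (Fin d) ℂ be an arbitrary complex matrix, ε ∈ ℝ, and T = N·ε. For every family A : ZMod N → Matrix (Fin d) (Fin d) ℂ, Tr(𝒮 * ⊗_t (Matrix.exp(−(i·ε) • H) * A t)) = tr( Matrix.exp(−(i·T) • H) * ∏_{k = N−1, N−2, …, 1, 0} ( Matrix.exp((i·ε·k) • H) * A k * Matrix.exp(−(i·ε·k) • H) ) ), where the product on the right runs over k in strictly decreasing order (time ordering). The left-hand side is Tr[e^{iS} ⊗_t A_t] for the quantum action operator e^{iS} := 𝒮 · ⊗_t e^{−iεH}, and the right-hand side is the time-ordered correlator of the Heisenberg operators A(εk) = e^{iεkH} A e^{−iεkH} weighted by e^{−iTH}; Hermiticity of H is not required. -/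
open Matrix Complex NormedSpace

/-- The slice-wise Kronecker product `⊗_t A t` on the `N`-fold tensor power of `ℂ^d`,
realized via matrices indexed by functions `ZMod N → Fin d`. -/
noncomputable def sliceProd (N d : ℕ) [NeZero N]
    (A : ZMod N → Matrix (Fin d) (Fin d) ℂ) :
    Matrix (ZMod N → Fin d) (ZMod N → Fin d) ℂ :=
  Matrix.of fun f g => ∏ t : ZMod N, A t (f t) (g t)

/-- The cyclic time-translation operator `𝒮` (representing `e^{iεP}`). -/
noncomputable def timeShift (N d : ℕ) [NeZero N] :
    Matrix (ZMod N → Fin d) (ZMod N → Fin d) ℂ :=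
  Matrix.of fun f g => if ∀ t : ZMod N, f t = g (t - 1) then 1 else 0

lemma prodEntry (d : ℕ) (M : ℕ → Matrix (Fin d) (Fin d) ℂ) :
    ∀ n, ∀ i j : Fin d, (((List.range n).reverse.map M).prod) i j
      = ∑ p : Fin (n+1) → Fin d,
          (if p (Fin.last n) = i ∧ p 0 = j then 1 else 0) *
            ∏ t : Fin n, M t (p t.succ) (p t.castSucc) := by
  intro n
  induction n with
  | zero =>
    intro i j
    simp only [List.range_zero, List.reverse_nil, List.map_nil, List.prod_nil,
      Finset.univ_unique, Fin.prod_univ_zero, mul_one]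
    rw [show (∑ p : Fin 1 → Fin d, if p (Fin.last 0) = i ∧ p 0 = j then (1:ℂ) else 0)
        = ∑ x : Fin d, if x = i ∧ x = j then (1:ℂ) else 0 from
      (Fintype.sum_equiv (Equiv.funUnique (Fin 1) (Fin d)) _ _ (fun p => rfl))]
    by_cases h : i = j
    · subst h; simp [Matrix.one_apply]
    · simp only [Matrix.one_apply, h, if_false]
      refine (Finset.sum_eq_zero ?_).symm
      intro x _
      simp only [ite_eq_right_iff, and_imp]
      intro hx hj; exact absurd (hx.symm.trans hj) h
  | succ n ih =>
    intro i j
    have hr : ((List.range (n+1)).reverse.map M).prod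
        = M n * ((List.range n).reverse.map M).prod := by
      rw [List.range_succ, List.reverse_append]; simp
    rw [hr, Matrix.mul_apply]
    simp_rw [ih]
    rw [show (∑ p : Fin (n+2) → Fin d,
          (if p (Fin.last (n+1)) = i ∧ p 0 = j then (1:ℂ) else 0) *
            ∏ t : Fin (n+1), M t (p t.succ) (p t.castSucc))
        = ∑ q : Fin d × (Fin (n+1) → Fin d),
          (if q.1 = i ∧ q.2 0 = j then (1:ℂ) else 0) *
            ((∏ t : Fin n, M t (q.2 t.succ) (q.2 t.castSucc)) * M n q.1 (q.2 (Fin.last n)))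
        from (Fintype.sum_equiv (Fin.snocEquiv (fun _ : Fin (n+2) => Fin d)) _ _ ?_).symm]
    · rw [Fintype.sum_prod_type]
      rw [Finset.sum_comm]
      simp_rw [Finset.mul_sum]
      rw [Finset.sum_comm]
      refine Finset.sum_congr rfl fun p _ => ?_
      by_cases h : p 0 = j <;>
        simp [h, Finset.sum_ite_eq, Finset.sum_ite_eq', mul_comm, mul_left_comm]
    · rintro ⟨x, p⟩
      simp only [Fin.snocEquiv_apply, Fin.snoc_last]
      congr 1
      · rw [Fin.prod_univ_castSucc]
        congr 1
        · refine Finset.prod_congr rfl fun t _ => ?_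
          rw [Fin.succ_castSucc, Fin.snoc_castSucc, Fin.snoc_castSucc, Fin.coe_castSucc]
        · rw [Fin.succ_last, Fin.snoc_last, Fin.snoc_castSucc, Fin.val_last]

lemma trace_timeShift_sliceProd (N d : ℕ) [NeZero N]
    (B : ZMod N → Matrix (Fin d) (Fin d) ℂ) :
    Matrix.trace (timeShift N d * sliceProd N d B) =
      Matrix.trace (((List.range N).reverse.map (fun (k : ℕ) => B (k : ZMod N))).prod) := by
  classical
  have hL : Matrix.trace (timeShift N d * sliceProd N d B)
      = ∑ f : ZMod N → Fin d, ∏ t : ZMod N, B t (f (t+1)) (f t) := by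
    rw [Matrix.trace]
    refine Finset.sum_congr rfl fun f _ => ?_
    rw [Matrix.diag_apply, Matrix.mul_apply]
    have h1 : ∀ g : ZMod N → Fin d,
        (∀ t : ZMod N, f t = g (t - 1)) ↔ g = fun t => f (t+1) := by
      intro g
      constructor
      · intro h; funext t
        have := h (t+1)
        rw [add_sub_cancel_right] at this
        exact this.symm
      · rintro rfl t
        show f t = f (t - 1 + 1)
        rw [sub_add_cancel]
    simp only [timeShift, sliceProd, Matrix.of_apply]
    calc (∑ g : ZMod N → Fin d, (if ∀ t : ZMod N, f t = g (t-1) then (1:ℂ) else 0) *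
            ∏ t : ZMod N, B t (g t) (f t))
        = ∑ g : ZMod N → Fin d, (if g = (fun t => f (t+1)) then
            (∏ t : ZMod N, B t (g t) (f t)) else 0) := by
          refine Finset.sum_congr rfl fun g _ => ?_
          rw [if_congr (h1 g) rfl rfl, ite_mul, one_mul, zero_mul]
      _ = ∏ t : ZMod N, B t (f (t+1)) (f t) := by
          rw [Finset.sum_ite_eq']; simp
  have hR : Matrix.trace (((List.range N).reverse.map (fun (k : ℕ) => B (k : ZMod N))).prod)
      = ∑ p : Fin (N+1) → Fin d, (if p (Fin.last N) = p 0 then (1:ℂ) else 0) *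
          ∏ t : Fin N, B ((t:ℕ) : ZMod N) (p t.succ) (p t.castSucc) := by
    simp only [Matrix.trace, Matrix.diag_apply]
    simp_rw [prodEntry d (fun (k : ℕ) => B (k : ZMod N)) N]
    rw [Finset.sum_comm]
    refine Finset.sum_congr rfl fun p _ => ?_
    by_cases h : p (Fin.last N) = p 0
    · rw [h]
      simp [Finset.sum_ite_eq, and_self, ite_mul, one_mul, zero_mul]
    · rw [if_neg h, zero_mul]
      refine Finset.sum_eq_zero fun i _ => ?_
      rw [if_neg, zero_mul]
      rintro ⟨h1, h2⟩
      exact h (h1.trans h2.symm)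
  rw [hL, hR]
  have hbij : Function.Bijective (fun t : Fin N => ((t : ℕ) : ZMod N)) := by
    rw [Fintype.bijective_iff_injective_and_card]
    refine ⟨fun a b h => ?_, by simp [ZMod.card]⟩
    apply Fin.ext
    have := congrArg ZMod.val h
    simpa [ZMod.val_cast_of_lt a.isLt, ZMod.val_cast_of_lt b.isLt] using this
  have hite : ∀ p : Fin (N+1) → Fin d,
      (if p (Fin.last N) = p 0 then (1:ℂ) else 0) *
          ∏ t : Fin N, B ((t:ℕ) : ZMod N) (p t.succ) (p t.castSucc)
        = if p (Fin.last N) = p 0 then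
            (∏ t : Fin N, B ((t:ℕ) : ZMod N) (p t.succ) (p t.castSucc)) else 0 := by
    intro p; split <;> simp
  simp_rw [hite]
  rw [← Finset.sum_filter]
  refine (Finset.sum_nbij' (fun p => fun s : ZMod N => p ⟨s.val, lt_of_lt_of_le
      (ZMod.val_lt s) (Nat.le_succ N)⟩)
    (fun g => fun t : Fin (N+1) => g ((t : ℕ) : ZMod N)) ?_ ?_ ?_ ?_ ?_).symm
  · intro p _; exact Finset.mem_univ _
  · intro g _
    rw [Finset.mem_filter]
    refine ⟨Finset.mem_univ _, ?_⟩
    simp [Fin.val_last, ZMod.natCast_self]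
  · intro p hp
    rw [Finset.mem_filter] at hp
    funext t
    show p ⟨(((t : ℕ) : ZMod N)).val, _⟩ = p t
    by_cases ht : (t : ℕ) < N
    · congr 1
      apply Fin.ext
      simp [ZMod.val_cast_of_lt ht]
    · have htl : t = Fin.last N :=
        Fin.ext (Nat.le_antisymm (Nat.lt_succ_iff.mp t.isLt) (le_of_not_gt ht))
      subst htl
      have h2 : (((Fin.last N : ℕ) : ZMod N)).val = 0 := by
        simp [Fin.val_last]
      have h0 : (⟨(((Fin.last N : ℕ) : ZMod N)).val,
          lt_of_lt_of_le (ZMod.val_lt _) (Nat.le_succ N)⟩ : Fin (N+1)) = 0 :=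
        Fin.ext (by simp [h2])
      rw [h0]
      exact hp.2.symm
  · intro g _
    funext s
    simp [ZMod.natCast_val, ZMod.cast_id]
  · intro p hp
    rw [Finset.mem_filter] at hp
    refine Fintype.prod_bijective (fun t : Fin N => ((t : ℕ) : ZMod N)) hbij _ _ fun t => ?_
    show B ((t : ℕ) : ZMod N) (p t.succ) (p t.castSucc)
      = B ((t : ℕ) : ZMod N) (p ⟨((((t : ℕ) : ZMod N) + 1)).val, _⟩)
          (p ⟨(((t : ℕ) : ZMod N)).val, _⟩)
    have h2 : (⟨(((t : ℕ) : ZMod N)).val,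
        lt_of_lt_of_le (ZMod.val_lt _) (Nat.le_succ N)⟩ : Fin (N+1)) = t.castSucc :=
      Fin.ext (by simp [ZMod.val_cast_of_lt t.isLt])
    have hcast : (((t : ℕ) : ZMod N) + 1) = (((t : ℕ) + 1 : ℕ) : ZMod N) := by push_cast; ring
    have h1 : (⟨((((t : ℕ) : ZMod N) + 1)).val,
        lt_of_lt_of_le (ZMod.val_lt _) (Nat.le_succ N)⟩ : Fin (N+1)) = t.succ ∨
        (((((t : ℕ) : ZMod N) + 1)).val = 0 ∧ t.succ = Fin.last N) := by
      by_cases h : (t : ℕ) + 1 < N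
      · left
        apply Fin.ext
        show ((((t : ℕ) : ZMod N) + 1)).val = t.succ.val
        rw [hcast, ZMod.val_cast_of_lt h, Fin.val_succ]
      · right
        have hN : (t : ℕ) + 1 = N := Nat.le_antisymm t.isLt (le_of_not_gt h)
        constructor
        · rw [hcast, hN, ZMod.natCast_self, ZMod.val_zero]
        · exact Fin.ext (by simp [Fin.val_last, hN])
    rcases h1 with h1 | ⟨h1, h1'⟩
    · rw [h1, h2]
    · have : (⟨((((t : ℕ) : ZMod N) + 1)).val,
          lt_of_lt_of_le (ZMod.val_lt _) (Nat.le_succ N)⟩ : Fin (N+1)) = 0 :=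
        Fin.ext (by simp [h1])
      rw [this, h2, h1', hp.2]

open NormedSpace in
lemma exp_telescope (d : ℕ) (H : Matrix (Fin d) (Fin d) ℂ) (c : ℂ)
    (A' : ℕ → Matrix (Fin d) (Fin d) ℂ) :
    ∀ n : ℕ, NormedSpace.exp ((-(c * (n : ℂ))) • H) *
      ((List.range n).reverse.map (fun (k : ℕ) =>
        NormedSpace.exp ((c * (k : ℂ)) • H) * A' k * NormedSpace.exp ((-(c * (k : ℂ))) • H))).prod
    = ((List.range n).reverse.map (fun (k : ℕ) => NormedSpace.exp ((-c) • H) * A' k)).prod := by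
  have hadd : ∀ s t : ℂ, NormedSpace.exp (s • H) * NormedSpace.exp (t • H) = NormedSpace.exp ((s + t) • H) := by
    intro s t
    rw [add_smul, Matrix.exp_add_of_commute]
    exact ((Commute.refl H).smul_left s).smul_right t
  intro n
  induction n with
  | zero =>
    simp [NormedSpace.exp_zero]
  | succ n ih =>
    rw [List.range_succ, List.reverse_append]
    simp only [List.reverse_singleton, List.singleton_append, List.map_cons, List.prod_cons]
    have e1 : NormedSpace.exp ((-(c * ((n+1 : ℕ) : ℂ))) • H) *
        ((NormedSpace.exp ((c * (n : ℂ)) • H) * A' n * NormedSpace.exp ((-(c * (n : ℂ))) • H)) *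
          ((List.range n).reverse.map (fun (k : ℕ) =>
            NormedSpace.exp ((c * (k : ℂ)) • H) * A' k * NormedSpace.exp ((-(c * (k : ℂ))) • H))).prod)
        = (NormedSpace.exp ((-(c * ((n+1 : ℕ) : ℂ))) • H) * NormedSpace.exp ((c * (n : ℂ)) • H)) *
          (A' n * (NormedSpace.exp ((-(c * (n : ℂ))) • H) *
            ((List.range n).reverse.map (fun (k : ℕ) =>
              NormedSpace.exp ((c * (k : ℂ)) • H) * A' k * NormedSpace.exp ((-(c * (k : ℂ))) • H))).prod)) := by
      simp only [mul_assoc]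
    rw [e1, hadd, ih]
    have e2 : (-(c * ((n+1 : ℕ) : ℂ)) + c * (n : ℂ)) = -c := by push_cast; ring
    rw [e2, ← mul_assoc]

/-- `Tr[e^{iS} ⊗_t A_t] = tr[e^{-iTH} T̂ ∏_k A(εk)]`: the spacetime trace against the
quantum action operator `e^{iS} = 𝒮 ⊗_t e^{-iεH}` equals the ordinary trace of
`e^{-iTH}` times the time-ordered product of the Heisenberg operators
`A(εk) = e^{iεkH} A e^{-iεkH}`, with `T = Nε`.  `H` need not be Hermitian. -/
theorem trace_quantumAction_sliceProd (N d : ℕ) [NeZero N] (hd : 1 ≤ d)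
    (H : Matrix (Fin d) (Fin d) ℂ) (ε : ℝ)
    (A : ZMod N → Matrix (Fin d) (Fin d) ℂ) :
    Matrix.trace (timeShift N d *
        sliceProd N d (fun t => NormedSpace.exp ((-(Complex.I * (ε : ℂ))) • H) * A t)) =
      Matrix.trace (NormedSpace.exp ((-(Complex.I * ((N : ℂ) * (ε : ℂ)))) • H) *
        ((List.range N).reverse.map (fun (k : ℕ) =>
          NormedSpace.exp ((Complex.I * (ε : ℂ) * (k : ℂ)) • H) * A (k : ZMod N) *
            NormedSpace.exp ((-(Complex.I * (ε : ℂ) * (k : ℂ))) • H))).prod) := by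
  have h1 : (-(Complex.I * ((N : ℂ) * (ε : ℂ)))) = -(Complex.I * (ε : ℂ) * ((N : ℕ) : ℂ)) := by
    push_cast; ring
  rw [h1, exp_telescope d H (Complex.I * (ε : ℂ)) (fun k => A (k : ZMod N)) N]
  exact trace_timeShift_sliceProd N d (fun t => NormedSpace.exp ((-(Complex.I * (ε : ℂ))) • H) * A t)
end

section
/- Let H : Matrix (Fin d) (Fin d) ℂ be Hermitian, ε ∈ ℝ, ρ : Matrix (Fin d) (Fin d) ℂ, and O : ZMod N → Matrix (Fin d) (Fin d) ℂ an arbitrary family of operators. Then the spacetime correlator equals the overlap of Choi vectors and equals the time-ordered Heisenberg correlator: Tr( G * (⊗_t O t) ) = ⟨Φ⁺, ((⊗_t O t) ⊗ 1) Ψ⟩ = tr( (∏_{k = N−1, …, 1} Matrix.exp((i·ε·k) • H) * O k * Matrix.exp(−(i·ε·k) • H)) * O 0 * ρ ), where Φ⁺ is the vector on the doubled index set with entries Φ⁺ (f, h) = δ_{f h}, Ψ is the vector with entries Ψ (f, h) = G f h, ((⊗_t O t) ⊗ 1) ((f,h),(g,h')) := (⊗_t O t) f g · δ_{h h'}, and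 the product over k on the right runs in strictly decreasing order (time ordering of the Heisenberg operators O(εk) = e^{iεkH} O e^{−iεkH}). -/
open Matrix Complex NormedSpace

/-- The slice-local operator `B_t`. -/
noncomputable def sliceLocal (N d : ℕ) [NeZero N]
    (B : Matrix (Fin d) (Fin d) ℂ) (t : ZMod N) :
    Matrix (ZMod N → Fin d) (ZMod N → Fin d) ℂ :=
  sliceProd N d (fun t' => if t' = t then B else 1)

/-- `𝒱 := ⊗_t e^{iεtH}`. -/
noncomputable def Vop (N d : ℕ) [NeZero N] (H : Matrix (Fin d) (Fin d) ℂ) (ε : ℝ) :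
    Matrix (ZMod N → Fin d) (ZMod N → Fin d) ℂ :=
  sliceProd N d (fun t => NormedSpace.exp ((Complex.I * (ε : ℂ) * (t.val : ℂ)) • H))

/-- `G := ρ₀ e^{iS̃}` with `e^{iS̃} = 𝒱ᴴ 𝒮 𝒱`. -/
noncomputable def Gst (N d : ℕ) [NeZero N] (H : Matrix (Fin d) (Fin d) ℂ) (ε : ℝ)
    (ρ : Matrix (Fin d) (Fin d) ℂ) :
    Matrix (ZMod N → Fin d) (ZMod N → Fin d) ℂ :=
  sliceLocal N d ρ 0 * ((Vop N d H ε)ᴴ * timeShift N d * Vop N d H ε)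

lemma list_decomp {α : Type*} [Monoid α] (Cn : ℕ → α) (n : ℕ) :
    ((List.range (n+1)).reverse.map Cn).prod =
    ((List.range n).reverse.map (Cn ∘ Nat.succ)).prod * Cn 0 := by
  rw [List.range_succ_eq_map, List.reverse_cons, List.map_append, List.prod_append]
  simp only [List.map_cons, List.map_nil, List.prod_cons, List.prod_nil, mul_one]
  rw [← List.map_reverse, List.map_map]


lemma prod_range_apply {d : ℕ} (C : ℕ → Matrix (Fin d) (Fin d) ℂ) :
    ∀ (k : ℕ) (x y : Fin d),
      (((List.range k).reverse.map C).prod) x y =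
      ∑ g : Fin k → Fin d,
        if (Fin.cons y g : Fin (k+1) → Fin d) (Fin.last k) = x then
          ∏ i : Fin k, C i (g i) ((Fin.cons y g : Fin (k+1) → Fin d) i.castSucc) else 0 := by
  intro k
  induction k with
  | zero =>
    intro x y
    simp [Matrix.one_apply, eq_comm]
  | succ k ih =>
    intro x y
    rw [List.range_succ, List.reverse_append]
    simp only [List.reverse_cons, List.reverse_nil, List.nil_append, List.map_cons,
      List.map_append, List.map_nil, List.cons_append, List.prod_cons]
    rw [Matrix.mul_apply]
    rw [← Equiv.sum_comp (Fin.snocEquiv (fun _ => Fin d))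
      (fun g : Fin (k+1) → Fin d =>
        if (Fin.cons y g : Fin (k+2) → Fin d) (Fin.last (k+1)) = x then
          ∏ i : Fin (k+1), C i (g i) ((Fin.cons y g : Fin (k+2) → Fin d) i.castSucc) else 0)]
    rw [Fintype.sum_prod_type]
    have commonL :
        (∑ z, C k x z * (List.map C (List.range k).reverse).prod z y) =
        ∑ g : Fin k → Fin d,
          C k x ((Fin.cons y g : Fin (k+1) → Fin d) (Fin.last k)) *
            ∏ i : Fin k, C i (g i) ((Fin.cons y g : Fin (k+1) → Fin d) i.castSucc) := by
      simp only [ih, Finset.mul_sum]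
      rw [Finset.sum_comm]
      refine Finset.sum_congr rfl fun g _ => ?_
      simp only [mul_ite, mul_zero]
      rw [Finset.sum_ite_eq]
      simp
    rw [commonL]
    conv_rhs => rw [Finset.sum_comm]
    refine Finset.sum_congr rfl fun g _ => ?_
    have hsnoc : ∀ z : Fin d, (Fin.snocEquiv (fun _ : Fin (k+1) => Fin d)) (z, g) = Fin.snoc g z :=
      fun _ => rfl
    simp only [hsnoc, Fin.cons_snoc_eq_snoc_cons, Fin.snoc_last]
    rw [Finset.sum_ite_eq']
    simp only [Finset.mem_univ, if_true]
    rw [Fin.prod_univ_castSucc, mul_comm]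
    congr 1
    · refine Finset.prod_congr rfl fun i _ => ?_
      rw [Fin.snoc_castSucc]
      have h2 : ((Fin.snoc (Fin.cons y g) x : Fin (k+2) → Fin d) (i.castSucc).castSucc) =
          (Fin.cons y g : Fin (k+1) → Fin d) i.castSucc := Fin.snoc_castSucc _ _ _
      rw [h2, Fin.coe_castSucc]
    · rw [Fin.snoc_last, Fin.val_last]
      have h3 : ((Fin.snoc (Fin.cons y g) x : Fin (k+2) → Fin d) ((Fin.last k).castSucc)) =
          (Fin.cons y g : Fin (k+1) → Fin d) (Fin.last k) := Fin.snoc_castSucc _ _ _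
      rw [h3]


noncomputable def cycEquiv (N d : ℕ) [NeZero N] : (ZMod N → Fin d) ≃ (Fin N → Fin d) where
  toFun h i := h (((i : ℕ) : ZMod N) + 1)
  invFun g t := g ⟨(t - 1).val, ZMod.val_lt _⟩
  left_inv h := by
    funext t
    simp only
    congr 1
    rw [ZMod.natCast_rightInverse (t - 1), sub_add_cancel]
  right_inv g := by
    funext i
    simp only
    congr 1
    apply Fin.ext
    simp only [add_sub_cancel_right]
    exact ZMod.val_cast_of_lt i.isLt

noncomputable def zmodEquiv (N : ℕ) [NeZero N] : Fin N ≃ ZMod N where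
  toFun i := ((i : ℕ) : ZMod N)
  invFun z := ⟨z.val, ZMod.val_lt z⟩
  left_inv i := Fin.ext (ZMod.val_cast_of_lt i.isLt)
  right_inv z := ZMod.natCast_rightInverse z

lemma trace_prod_cyclic {N d : ℕ} [NeZero N] (C : ℕ → Matrix (Fin d) (Fin d) ℂ) :
    Matrix.trace (((List.range N).reverse.map C).prod) =
    ∑ h : ZMod N → Fin d, ∏ t : ZMod N, C t.val (h (t + 1)) (h t) := by
  have hN : N - 1 < N := Nat.sub_lt (Nat.pos_of_ne_zero (NeZero.ne N)) one_pos
  have hlast : (Fin.last N) = Fin.succ ⟨N - 1, hN⟩ := by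
    apply Fin.ext
    show N = N - 1 + 1
    omega
  have step1 : Matrix.trace (((List.range N).reverse.map C).prod) =
      ∑ g : Fin N → Fin d,
        ∏ i : Fin N, C i (g i)
          ((Fin.cons (g ⟨N - 1, hN⟩) g : Fin (N+1) → Fin d) i.castSucc) := by
    rw [Matrix.trace]
    simp only [Matrix.diag_apply, prod_range_apply C N]
    rw [Finset.sum_comm]
    refine Finset.sum_congr rfl fun g _ => ?_
    have hc : ∀ x : Fin d, (Fin.cons x g : Fin (N+1) → Fin d) (Fin.last N) = g ⟨N - 1, hN⟩ := by
      intro x; rw [hlast, Fin.cons_succ]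
    simp only [hc]
    rw [Finset.sum_ite_eq]
    simp
  rw [step1]
  refine (Fintype.sum_equiv (cycEquiv N d) _ _ fun h => ?_).symm
  rw [← Equiv.prod_comp (zmodEquiv N) (fun t : ZMod N => C t.val (h (t + 1)) (h t))]
  refine Finset.prod_congr rfl fun i _ => ?_
  have hval : (((i : ℕ) : ZMod N)).val = (i : ℕ) := ZMod.val_cast_of_lt i.isLt
  have hEi : (cycEquiv N d h) i = h (((i : ℕ) : ZMod N) + 1) := rfl
  have hx0 : (cycEquiv N d h) ⟨N - 1, hN⟩ = h 0 := by
    show h (((N - 1 : ℕ) : ZMod N) + 1) = h 0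
    congr 1
    have h1 : (N - 1) + 1 = N := Nat.sub_add_cancel (Nat.pos_of_ne_zero (NeZero.ne N))
    calc ((N - 1 : ℕ) : ZMod N) + 1 = (((N - 1) + 1 : ℕ) : ZMod N) := by push_cast; ring
      _ = 0 := by rw [h1, ZMod.natCast_self]
  have hcons : ((Fin.cons ((cycEquiv N d h) ⟨N - 1, hN⟩) (cycEquiv N d h) : Fin (N+1) → Fin d)
      i.castSucc) = h ((i : ℕ) : ZMod N) := by
    obtain ⟨v, hv⟩ := i
    cases v with
    | zero =>
      have : (⟨0, hv⟩ : Fin N).castSucc = 0 := rfl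
      rw [this, Fin.cons_zero, hx0]
      norm_num
    | succ m =>
      have hm : m < N := Nat.lt_of_succ_lt hv
      have : (⟨m + 1, hv⟩ : Fin N).castSucc = Fin.succ ⟨m, hm⟩ := rfl
      rw [this, Fin.cons_succ]
      show h (((m : ℕ) : ZMod N) + 1) = _
      congr 1
      push_cast
      ring
  have hz : zmodEquiv N i = ((i : ℕ) : ZMod N) := rfl
  rw [hcons, hz, hval, hEi]

lemma sliceProd_mul {N d : ℕ} [NeZero N] (A B : ZMod N → Matrix (Fin d) (Fin d) ℂ) :
    sliceProd N d A * sliceProd N d B = sliceProd N d (fun t => A t * B t) := by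
  ext f g
  simp only [sliceProd, Matrix.mul_apply, Matrix.of_apply]
  rw [Finset.prod_univ_sum (fun _ => (Finset.univ : Finset (Fin d)))
    (fun t x => A t (f t) x * B t x (g t)), Fintype.piFinset_univ]
  exact Finset.sum_congr rfl fun h _ => (Finset.prod_mul_distrib).symm

lemma sliceProd_conjTranspose {N d : ℕ} [NeZero N] (A : ZMod N → Matrix (Fin d) (Fin d) ℂ) :
    (sliceProd N d A)ᴴ = sliceProd N d (fun t => (A t)ᴴ) := by
  ext f g
  simp only [sliceProd, Matrix.conjTranspose_apply, Matrix.of_apply, star_prod]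

lemma trace_transfer {N d : ℕ} [NeZero N] (A B : ZMod N → Matrix (Fin d) (Fin d) ℂ) :
    Matrix.trace (sliceProd N d A * timeShift N d * sliceProd N d B) =
    ∑ g : ZMod N → Fin d, ∏ t : ZMod N, (B t * A t) (g (t + 1)) (g t) := by
  have hdiag : ∀ g f : ZMod N → Fin d, (timeShift N d * sliceProd N d B) g f =
      ∏ t : ZMod N, B t (g (t + 1)) (f t) := by
    intro g f
    simp only [Matrix.mul_apply, timeShift, Matrix.of_apply, sliceProd]
    rw [Finset.sum_eq_single (fun s => g (s + 1))]
    · simp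
    · intro h _ hne
      rw [if_neg, zero_mul]
      intro hc
      exact hne (funext fun s => by rw [hc (s + 1), add_sub_cancel_right])
    · simp
  have expand : Matrix.trace (sliceProd N d A * timeShift N d * sliceProd N d B)
      = ∑ f : ZMod N → Fin d, ∑ g : ZMod N → Fin d,
          (∏ t : ZMod N, A t (f t) (g t)) * ∏ t : ZMod N, B t (g (t + 1)) (f t) := by
    rw [Matrix.mul_assoc, Matrix.trace]
    refine Finset.sum_congr rfl fun f _ => ?_
    rw [Matrix.diag_apply, Matrix.mul_apply]
    exact Finset.sum_congr rfl fun g _ => by rw [hdiag]; rfl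
  rw [expand, Finset.sum_comm]
  refine Finset.sum_congr rfl fun g _ => ?_
  simp only [Matrix.mul_apply]
  rw [Finset.prod_univ_sum (fun _ => (Finset.univ : Finset (Fin d)))
    (fun t x => B t (g (t + 1)) x * A t x (g t)), Fintype.piFinset_univ]
  refine Finset.sum_congr rfl fun f _ => ?_
  rw [← Finset.prod_mul_distrib]
  exact Finset.prod_congr rfl fun t _ => mul_comm _ _

/-- The maximally entangled vector `Φ⁺` on the doubled index set. -/
noncomputable def PhiPlus (N d : ℕ) [NeZero N] :
    ((ZMod N → Fin d) × (ZMod N → Fin d)) → ℂ :=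
  fun p => if p.1 = p.2 then 1 else 0

/-- The Choi vector `Ψ` of `G`. -/
noncomputable def PsiVec (N d : ℕ) [NeZero N] (H : Matrix (Fin d) (Fin d) ℂ) (ε : ℝ)
    (ρ : Matrix (Fin d) (Fin d) ℂ) :
    ((ZMod N → Fin d) × (ZMod N → Fin d)) → ℂ :=
  fun p => Gst N d H ε ρ p.1 p.2

/-- The operator `(⊗_t O t) ⊗ 1` acting on the doubled space. -/
noncomputable def extOp (N d : ℕ) [NeZero N]
    (O : ZMod N → Matrix (Fin d) (Fin d) ℂ) :
    Matrix ((ZMod N → Fin d) × (ZMod N → Fin d))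
      ((ZMod N → Fin d) × (ZMod N → Fin d)) ℂ :=
  Matrix.of fun p q => sliceProd N d O p.1 q.1 * (if p.2 = q.2 then 1 else 0)

/-- The spacetime correlator equals the overlap of Choi vectors and equals the
time-ordered Heisenberg correlator:
`Tr(G ⊗_t O t) = ⟨Φ⁺, ((⊗_t O t) ⊗ 1) Ψ⟩
  = tr((∏_{k=N−1,…,1} e^{iεkH} O_k e^{−iεkH}) O_0 ρ)`,
the product over `k` running in strictly decreasing (time-ordered) order. -/
theorem spacetime_correlator_choi (N d : ℕ) [NeZero N] (hd : 1 ≤ d)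
    (H : Matrix (Fin d) (Fin d) ℂ) (hH : H.IsHermitian) (ε : ℝ)
    (ρ : Matrix (Fin d) (Fin d) ℂ)
    (O : ZMod N → Matrix (Fin d) (Fin d) ℂ) :
    Matrix.trace (Gst N d H ε ρ * sliceProd N d O) =
        dotProduct (star (PhiPlus N d))
          (extOp N d O *ᵥ PsiVec N d H ε ρ) ∧
      Matrix.trace (Gst N d H ε ρ * sliceProd N d O) =
        Matrix.trace
          ((((List.range (N - 1)).reverse.map (fun (m : ℕ) =>
              NormedSpace.exp ((Complex.I * (ε : ℂ) * ((m : ℂ) + 1)) • H) *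
                O ((m + 1 : ℕ) : ZMod N) *
                NormedSpace.exp ((-(Complex.I * (ε : ℂ) * ((m : ℂ) + 1))) • H))).prod) *
            O 0 * ρ) := by
  constructor
  · simp only [dotProduct, Matrix.mulVec, PhiPlus, PsiVec, extOp, Pi.star_apply,
      apply_ite (star : ℂ → ℂ), star_one, star_zero, Matrix.of_apply, Matrix.trace,
      Matrix.diag_apply, Matrix.mul_apply, Fintype.sum_prod_type]
    simp only [ite_mul, one_mul, zero_mul, mul_ite, mul_one, mul_zero, Finset.sum_ite_eq,
      Finset.sum_ite_eq', Finset.mem_univ, if_true]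
    rw [Finset.sum_comm]
    exact Finset.sum_congr rfl fun g _ => Finset.sum_congr rfl fun f _ => mul_comm _ _
  · have hone : (1 : ℕ) ≤ N := Nat.one_le_iff_ne_zero.mpr (NeZero.ne N)
    set Cnat : ℕ → Matrix (Fin d) (Fin d) ℂ := fun m =>
      NormedSpace.exp ((Complex.I * (ε : ℂ) * (m : ℂ)) • H) * O ((m : ℕ) : ZMod N) *
        (if m = 0 then ρ else 1) * NormedSpace.exp ((-(Complex.I * (ε : ℂ) * (m : ℂ))) • H) with hCnat
    have hexp : ∀ t : ZMod N, (NormedSpace.exp ((Complex.I * (ε : ℂ) * (t.val : ℂ)) • H))ᴴ =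
        NormedSpace.exp ((-(Complex.I * (ε : ℂ) * (t.val : ℂ))) • H) := by
      intro t
      rw [← Matrix.exp_conjTranspose, Matrix.conjTranspose_smul, hH.eq]
      congr 1
      simp only [Complex.star_def, _root_.map_mul, Complex.conj_I, Complex.conj_ofReal,
        Complex.conj_natCast]
      ring
    have hVH : (Vop N d H ε)ᴴ = sliceProd N d
        (fun t => NormedSpace.exp ((-(Complex.I * (ε : ℂ) * (t.val : ℂ))) • H)) := by
      rw [Vop, sliceProd_conjTranspose]
      simp only [hexp]
    have hsplit : Gst N d H ε ρ * sliceProd N d O =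
        sliceProd N d (fun t => (if t = 0 then ρ else 1) *
            NormedSpace.exp ((-(Complex.I * (ε : ℂ) * (t.val : ℂ))) • H)) *
          timeShift N d *
          sliceProd N d (fun t => NormedSpace.exp ((Complex.I * (ε : ℂ) * (t.val : ℂ)) • H) * O t) := by
      rw [Gst, sliceLocal, hVH, Vop]
      rw [← sliceProd_mul, ← sliceProd_mul]
      noncomm_ring
    have hBA : ∀ t : ZMod N,
        (NormedSpace.exp ((Complex.I * (ε : ℂ) * (t.val : ℂ)) • H) * O t) *
          ((if t = 0 then ρ else 1) *
            NormedSpace.exp ((-(Complex.I * (ε : ℂ) * (t.val : ℂ))) • H)) = Cnat t.val := by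
      intro t
      rw [hCnat]
      simp only
      rw [ZMod.natCast_rightInverse t]
      have : (if t.val = 0 then ρ else 1) = (if t = 0 then ρ else 1) := by
        simp [ZMod.val_eq_zero]
      rw [this]
      noncomm_ring
    rw [hsplit, trace_transfer]
    have cyc : (∑ g : ZMod N → Fin d, ∏ t : ZMod N,
        ((NormedSpace.exp ((Complex.I * (ε : ℂ) * (t.val : ℂ)) • H) * O t) *
          ((if t = 0 then ρ else 1) *
            NormedSpace.exp ((-(Complex.I * (ε : ℂ) * (t.val : ℂ))) • H))) (g (t + 1)) (g t)) =
        ∑ g : ZMod N → Fin d, ∏ t : ZMod N, Cnat t.val (g (t + 1)) (g t) := by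
      refine Finset.sum_congr rfl fun g _ => Finset.prod_congr rfl fun t _ => ?_
      rw [hBA t]
    rw [cyc, ← trace_prod_cyclic Cnat]
    congr 1
    have hC0 : Cnat 0 = O 0 * ρ := by
      rw [hCnat]
      simp [NormedSpace.exp_zero]
    have hCsucc : (Cnat ∘ Nat.succ) = fun m : ℕ =>
        NormedSpace.exp ((Complex.I * (ε : ℂ) * ((m : ℂ) + 1)) • H) * O ((m + 1 : ℕ) : ZMod N) *
          NormedSpace.exp ((-(Complex.I * (ε : ℂ) * ((m : ℂ) + 1))) • H) := by
      funext m
      rw [Function.comp_apply, hCnat]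
      simp only [Nat.succ_ne_zero, if_false, mul_one, Nat.succ_eq_add_one]
      have harg : ((m + 1 : ℕ) : ℂ) = (m : ℂ) + 1 := by push_cast; ring
      rw [harg]
    rw [show (List.range N) = List.range ((N - 1) + 1) from by rw [Nat.sub_add_cancel hone]]
    rw [list_decomp, hCsucc, hC0, ← Matrix.mul_assoc]
end
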